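/- Let f(x) = exp(−x^b) for x ≥ 1 with b > 0. Then the integral ∫_1^∞ (∫_1^x 1/f(y) dy) f(x) dx is infinite if and only if b ≤ 2. -/

import Mathlib

open MeasureTheory Set

lemma exp_rpow_integrableOn {b u v : ℝ} (hu : 0 < u) :
    IntegrableOn (fun y : ℝ => Real.exp (y ^ b)) (Ioc u v) := by
  have hc : ContinuousOn (fun y : ℝ => Real.exp (y ^ b)) (Icc u v) := by
    intro y hy
    have hy0 : y ≠ 0 := by have := hy.1; intro h; rw [h] at this; linarith
    exact ((Real.continuousAt_rpow_const y b (Or.inl hy0)).rexp).continuousWithinAt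
  exact (hc.integrableOn_compact isCompact_Icc).mono_set Ioc_subset_Icc_self

lemma inner_upper {b : ℝ} (hb2 : 2 < b) {x : ℝ} (hx : 1 < x) :
    (∫ y in Ioc (1:ℝ) x, Real.exp (y ^ b)) ≤ Real.exp (x ^ b) * x ^ (1 - b) := by
  set F' : ℝ → ℝ := fun y =>
    Real.exp (y ^ b) * (b * y ^ (b - 1)) * y ^ (1 - b) +
      Real.exp (y ^ b) * ((1 - b) * y ^ (1 - b - 1)) with hF'
  have hb0 : (0:ℝ) < b := by linarith
  have huIcc : uIcc (1:ℝ) x = Icc 1 x := uIcc_of_le hx.le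
  have hderiv : ∀ y ∈ uIcc (1:ℝ) x,
      HasDerivAt (fun y => Real.exp (y ^ b) * y ^ (1 - b)) (F' y) y := by
    intro y hy
    rw [huIcc] at hy
    have hy0 : y ≠ 0 := by have := hy.1; intro h; rw [h] at this; linarith
    have hd1 : HasDerivAt (fun y : ℝ => y ^ b) (b * y ^ (b - 1)) y :=
      Real.hasDerivAt_rpow_const (Or.inl hy0)
    have hd2 := hd1.exp
    have hd3 : HasDerivAt (fun y : ℝ => y ^ (1 - b)) ((1 - b) * y ^ (1 - b - 1)) y :=
      Real.hasDerivAt_rpow_const (Or.inl hy0)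
    exact hd2.mul hd3
  have hcontF' : ContinuousOn F' (uIcc (1:ℝ) x) := by
    rw [huIcc]
    intro y hy
    have hy0 : y ≠ 0 := by have := hy.1; intro h; rw [h] at this; linarith
    have c1 := Real.continuousAt_rpow_const y b (Or.inl hy0)
    have c2 := Real.continuousAt_rpow_const y (b - 1) (Or.inl hy0)
    have c3 := Real.continuousAt_rpow_const y (1 - b) (Or.inl hy0)
    have c4 := Real.continuousAt_rpow_const y (1 - b - 1) (Or.inl hy0)
    exact ((((c1.rexp.mul ((continuousAt_const.mul c2))).mul c3).add
      (c1.rexp.mul (continuousAt_const.mul c4)))).continuousWithinAt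
  have hcontE : ContinuousOn (fun y : ℝ => Real.exp (y ^ b)) (uIcc (1:ℝ) x) := by
    rw [huIcc]
    intro y hy
    have hy0 : y ≠ 0 := by have := hy.1; intro h; rw [h] at this; linarith
    exact ((Real.continuousAt_rpow_const y b (Or.inl hy0)).rexp).continuousWithinAt
  have hintF' : IntervalIntegrable F' volume 1 x := hcontF'.intervalIntegrable
  have hintE : IntervalIntegrable (fun y : ℝ => Real.exp (y ^ b)) volume 1 x :=
    hcontE.intervalIntegrable
  have hmono : ∀ y ∈ Icc (1:ℝ) x, Real.exp (y ^ b) ≤ F' y := by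
    intro y hy
    have hy1 : (1:ℝ) ≤ y := hy.1
    have hy0 : (0:ℝ) < y := by linarith
    have h1 : y ^ (b - 1) * y ^ (1 - b) = 1 := by
      rw [← Real.rpow_add hy0]; norm_num
    have h2 : y ^ (1 - b - 1) ≤ 1 :=
      Real.rpow_le_one_of_one_le_of_nonpos hy1 (by linarith)
    have h3 : 0 ≤ y ^ (1 - b - 1) := Real.rpow_nonneg hy0.le _
    have hE : 0 < Real.exp (y ^ b) := Real.exp_pos _
    have key : Real.exp (y ^ b) * (b * y ^ (b - 1)) * y ^ (1 - b)
        = Real.exp (y ^ b) * b := by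
      linear_combination (Real.exp (y ^ b) * b) * h1
    rw [hF']
    simp only
    rw [key]
    nlinarith [mul_nonneg (mul_nonneg (by linarith : (0:ℝ) ≤ b - 1)
      (by linarith : (0:ℝ) ≤ 1 - y ^ (1 - b - 1))) hE.le]
  have hFTC := intervalIntegral.integral_eq_sub_of_hasDerivAt hderiv hintF'
  have hle := intervalIntegral.integral_mono_on hx.le hintE hintF' hmono
  rw [hFTC] at hle
  rw [← intervalIntegral.integral_of_le hx.le]
  have hF1 : Real.exp ((1:ℝ) ^ b) * (1:ℝ) ^ (1 - b) = Real.exp 1 := by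
    rw [Real.one_rpow, Real.one_rpow, mul_one]
  calc ∫ y in (1:ℝ)..x, Real.exp (y ^ b)
      ≤ Real.exp (x ^ b) * x ^ (1 - b) - Real.exp ((1:ℝ) ^ b) * (1:ℝ) ^ (1 - b) := hle
    _ ≤ Real.exp (x ^ b) * x ^ (1 - b) := by
        rw [hF1]; have := Real.exp_pos 1; linarith

lemma inner_lower {b : ℝ} (hb : 0 < b) (hb2 : b ≤ 2) {x : ℝ} (hx : 2 ≤ x) :
    x⁻¹ * Real.exp (x ^ b - 2) ≤ ∫ y in Ioc (1:ℝ) x, Real.exp (y ^ b) := by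
  have hx0 : (0:ℝ) < x := by linarith
  have hx1 : (1:ℝ) ≤ x := by linarith
  set ε : ℝ := min 1 (x ^ (1 - b)) with hε
  have hε0 : 0 < ε := lt_min one_pos (Real.rpow_pos_of_pos hx0 _)
  have hε1 : ε ≤ 1 := min_le_left _ _
  set s : ℝ := x - ε with hs
  have hs1 : (1:ℝ) ≤ s := by simp only [hs]; linarith
  have hs0 : (0:ℝ) < s := by linarith
  have hsx : s < x := by simp only [hs]; linarith
  -- key: x ^ b - s ^ b ≤ 2
  have hkey : x ^ b ≤ s ^ b + 2 := by
    rcases le_or_gt b 1 with hb1 | hb1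
    · -- ε = 1, concave Bernoulli
      have hε' : ε = 1 := min_eq_left (Real.one_le_rpow hx1 (by linarith))
      have hsx' : x = s * (1 + 1/s) := by
        field_simp
        rw [hs, hε']; ring
      have hber : (1 + 1/s) ^ b ≤ 1 + b * (1/s) :=
        rpow_one_add_le_one_add_mul_self
          (by have h0 : (0:ℝ) ≤ 1/s := by positivity
              linarith : (-1:ℝ) ≤ 1/s) hb.le hb1
      have hmul : x ^ b = s ^ b * (1 + 1/s) ^ b := by
        rw [hsx', Real.mul_rpow hs0.le (by positivity)]
      have hsb1 : s ^ (b - 1) ≤ 1 :=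
        Real.rpow_le_one_of_one_le_of_nonpos hs1 (by linarith)
      have hsplit : s ^ b * (1/s) = s ^ (b - 1) := by
        rw [one_div, ← Real.rpow_neg_one s, ← Real.rpow_add hs0]
        ring_nf
      have hsb0 : 0 ≤ s ^ b := Real.rpow_nonneg hs0.le _
      calc x ^ b = s ^ b * (1 + 1/s) ^ b := hmul
        _ ≤ s ^ b * (1 + b * (1/s)) := by
            apply mul_le_mul_of_nonneg_left hber hsb0
        _ = s ^ b + b * (s ^ b * (1/s)) := by ring
        _ = s ^ b + b * s ^ (b - 1) := by rw [hsplit]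
        _ ≤ s ^ b + 2 := by nlinarith
    · -- ε = x ^ (1-b), convex Bernoulli
      have hε' : ε = x ^ (1 - b) :=
        min_eq_right (Real.rpow_le_one_of_one_le_of_nonpos hx1 (by linarith))
      have hxm : x ^ (-b) ≤ 1 := Real.rpow_le_one_of_one_le_of_nonpos hx1 (by linarith)
      have hxm0 : 0 < x ^ (-b) := Real.rpow_pos_of_pos hx0 _
      have hsx' : s = x * (1 + (-(x ^ (-b)))) := by
        have : x * x ^ (-b) = x ^ (1 - b) := by
          nth_rewrite 1 [← Real.rpow_one x]
          rw [← Real.rpow_add hx0]; ring_nf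
        rw [hs, hε']; rw [← this]; ring
      have hber : 1 + b * (-(x ^ (-b))) ≤ (1 + (-(x ^ (-b)))) ^ b :=
        one_add_mul_self_le_rpow_one_add (by linarith) hb1.le
      have hmul : s ^ b = x ^ b * (1 + (-(x ^ (-b)))) ^ b := by
        rw [hsx', Real.mul_rpow hx0.le (by linarith)]
      have hxb0 : 0 ≤ x ^ b := Real.rpow_nonneg hx0.le _
      have hxbxm : x ^ b * x ^ (-b) = 1 := by
        rw [← Real.rpow_add hx0]; norm_num
      have : x ^ b * (1 + b * (-(x ^ (-b)))) ≤ s ^ b := by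
        rw [hmul]
        exact mul_le_mul_of_nonneg_left hber hxb0
      have hexp : x ^ b * (1 + b * (-(x ^ (-b)))) = x ^ b - b := by
        have : x ^ b * (b * x ^ (-b)) = b := by
          rw [mul_comm b, ← mul_assoc, hxbxm, one_mul]
        nlinarith [this]
      nlinarith [this, hexp]
  -- lower bound the integral
  have hint1 : IntegrableOn (fun y : ℝ => Real.exp (y ^ b)) (Ioc 1 x) :=
    exp_rpow_integrableOn one_pos
  have hint2 : IntegrableOn (fun y : ℝ => Real.exp (y ^ b)) (Ioc s x) :=
    exp_rpow_integrableOn hs0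
  have hstep1 : (x - s) * Real.exp (s ^ b) ≤ ∫ y in Ioc s x, Real.exp (y ^ b) := by
    have hconst : (∫ _y in Ioc s x, Real.exp (s ^ b)) = (x - s) * Real.exp (s ^ b) := by
      rw [setIntegral_const, Real.volume_real_Ioc_of_le (by linarith), smul_eq_mul]
    rw [← hconst]
    apply setIntegral_mono_on (integrableOn_const (by
      rw [Real.volume_Ioc]; exact ENNReal.ofReal_ne_top)) hint2 measurableSet_Ioc
    intro y hy
    exact Real.exp_le_exp.2 (Real.rpow_le_rpow hs0.le hy.1.le hb.le)
  have hstep2 : (∫ y in Ioc s x, Real.exp (y ^ b)) ≤ ∫ y in Ioc (1:ℝ) x, Real.exp (y ^ b) := by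
    apply setIntegral_mono_set hint1
    · exact ae_of_all _ fun y => (Real.exp_pos _).le
    · exact HasSubset.Subset.eventuallyLE (Ioc_subset_Ioc (by linarith) le_rfl)
  have hεx : x⁻¹ ≤ ε := by
    have h1 : x ^ (-1:ℝ) ≤ x ^ (1 - b) :=
      Real.rpow_le_rpow_of_exponent_le hx1 (by linarith)
    rw [Real.rpow_neg_one] at h1
    have h2 : x⁻¹ ≤ 1 := by
      rw [inv_le_one_iff₀]; right; linarith
    exact le_min h2 h1
  have hes : Real.exp (x ^ b - 2) ≤ Real.exp (s ^ b) :=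
    Real.exp_le_exp.2 (by linarith)
  calc x⁻¹ * Real.exp (x ^ b - 2) ≤ ε * Real.exp (s ^ b) := by
        apply mul_le_mul hεx hes (Real.exp_pos _).le hε0.le
    _ = (x - s) * Real.exp (s ^ b) := by rw [hs]; ring_nf
    _ ≤ _ := hstep1.trans hstep2

/-- For the horn-domain profile f(x) = exp(−x^b), b > 0, the trap-domain
integral ∫_1^∞ (∫_1^x 1/f(y) dy) f(x) dx is infinite iff b ≤ 2. -/
theorem horn_domain_trap_iff (b : ℝ) (hb : 0 < b) :
    (∫⁻ x in Ioi (1 : ℝ),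
        ENNReal.ofReal ((∫ y in Ioc (1 : ℝ) x, (Real.exp (-(y ^ b)))⁻¹) *
          Real.exp (-(x ^ b))) = ⊤) ↔ b ≤ 2 := by
  have hinv : ∀ y : ℝ, (Real.exp (-(y ^ b)))⁻¹ = Real.exp (y ^ b) := by
    intro y; rw [Real.exp_neg, inv_inv]
  simp only [hinv]
  rcases le_or_gt b 2 with h | h
  · simp only [h, iff_true]
    -- divergence
    have hlow : ∀ x ∈ Ioi (2:ℝ),
        ENNReal.ofReal (Real.exp (-2) * x⁻¹)
          ≤ ENNReal.ofReal ((∫ y in Ioc (1:ℝ) x, Real.exp (y ^ b)) * Real.exp (-(x ^ b))) := by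
      intro x hx
      have hx2 : (2:ℝ) ≤ x := (mem_Ioi.1 hx).le
      apply ENNReal.ofReal_le_ofReal
      have h1 := inner_lower hb h hx2
      have h2 : (x⁻¹ * Real.exp (x ^ b - 2)) * Real.exp (-(x ^ b))
          = Real.exp (-2) * x⁻¹ := by
        rw [mul_assoc, ← Real.exp_add]; ring_nf
      rw [← h2]
      exact mul_le_mul_of_nonneg_right h1 (Real.exp_pos _).le
    have hsub : (∫⁻ x in Ioi (2:ℝ), ENNReal.ofReal (Real.exp (-2) * x⁻¹))
        ≤ ∫⁻ x in Ioi (1:ℝ),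
          ENNReal.ofReal ((∫ y in Ioc (1:ℝ) x, Real.exp (y ^ b)) * Real.exp (-(x ^ b))) := by
      refine le_trans ?_ (lintegral_mono_set (Ioi_subset_Ioi (by norm_num : (1:ℝ) ≤ 2)))
      exact setLIntegral_mono' measurableSet_Ioi hlow
    have htop : (∫⁻ x in Ioi (2:ℝ), ENNReal.ofReal (Real.exp (-2) * x⁻¹)) = ⊤ := by
      by_contra hfin
      have hmeas : Measurable (fun x : ℝ => Real.exp (-2) * x⁻¹) :=
        measurable_const.mul measurable_inv
      have hInt : IntegrableOn (fun x : ℝ => Real.exp (-2) * x⁻¹) (Ioi 2) := by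
        refine ⟨hmeas.aestronglyMeasurable, ?_⟩
        rw [HasFiniteIntegral]
        have : ∀ᵐ x ∂(volume.restrict (Ioi (2:ℝ))),
            (‖Real.exp (-2) * x⁻¹‖ₑ : ENNReal) = ENNReal.ofReal (Real.exp (-2) * x⁻¹) := by
          filter_upwards [ae_restrict_mem measurableSet_Ioi] with x hx
          rw [Real.enorm_eq_ofReal_abs, abs_of_nonneg]
          exact mul_nonneg (Real.exp_pos _).le (inv_nonneg.2 (by linarith [mem_Ioi.1 hx]))
        rw [lintegral_congr_ae this]
        exact lt_top_iff_ne_top.2 hfin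
      have hInt2 : IntegrableOn (fun x : ℝ => x ^ (-1:ℝ)) (Ioi (2:ℝ)) := by
        have h2 : IntegrableOn (fun x : ℝ => Real.exp 2 * (Real.exp (-2) * x⁻¹)) (Ioi 2) :=
          hInt.const_mul _
        apply h2.congr_fun ?_ measurableSet_Ioi
        intro x hx
        simp only
        rw [Real.rpow_neg_one, ← mul_assoc, ← Real.exp_add]
        norm_num
      rw [integrableOn_Ioi_rpow_iff (by norm_num : (0:ℝ) < 2)] at hInt2
      linarith
    exact top_le_iff.1 (htop ▸ hsub)
  · simp only [not_le.2 h, iff_false]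
    intro hcontra
    have hup : ∀ x ∈ Ioi (1:ℝ),
        ENNReal.ofReal ((∫ y in Ioc (1:ℝ) x, Real.exp (y ^ b)) * Real.exp (-(x ^ b)))
          ≤ ENNReal.ofReal (x ^ (1 - b)) := by
      intro x hx
      have hx1 : (1:ℝ) < x := mem_Ioi.1 hx
      apply ENNReal.ofReal_le_ofReal
      have h1 := inner_upper h hx1
      have h2 : (Real.exp (x ^ b) * x ^ (1 - b)) * Real.exp (-(x ^ b)) = x ^ (1 - b) := by
        rw [mul_comm (Real.exp (x ^ b)), mul_assoc, ← Real.exp_add]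
        norm_num
      rw [← h2]
      exact mul_le_mul_of_nonneg_right h1 (Real.exp_pos _).le
    have hbound : (∫⁻ x in Ioi (1:ℝ),
        ENNReal.ofReal ((∫ y in Ioc (1:ℝ) x, Real.exp (y ^ b)) * Real.exp (-(x ^ b))))
          ≤ ∫⁻ x in Ioi (1:ℝ), ENNReal.ofReal (x ^ (1 - b)) := by
      exact setLIntegral_mono' measurableSet_Ioi hup
    have hfin : (∫⁻ x in Ioi (1:ℝ), ENNReal.ofReal (x ^ (1 - b))) < ⊤ := by
      have hInt : IntegrableOn (fun x : ℝ => x ^ (1 - b)) (Ioi (1:ℝ)) :=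
        integrableOn_Ioi_rpow_of_lt (by linarith) one_pos
      have := hInt.2
      rw [HasFiniteIntegral] at this
      refine lt_of_le_of_lt (lintegral_mono fun x => ?_) this
      exact Real.ofReal_le_enorm _
    rw [hcontra] at hbound
    exact absurd (top_le_iff.1 hbound) hfin.ne
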